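/- In an MCR game all of whose vertices have finite value, the non-increasing sequence of i-step values (val_i)_{i≥0} converges pointwise to the value vector Val, and Val is the greatest fixed point of the operator F. -/

import Mathlib

open Filter

/-- A two-player turn-based weighted game graph. `owner v = true` means that
vertex `v` belongs to player Max, `owner v = false` that it belongs to player Min.
Every vertex has at least one successor. -/
structure Game (V : Type) where
  owner : V → Bool
  E : V → V → Prop
  nonempty : ∀ v, ∃ v', E v v'
  w : V → V → ℤ

namespace Game

variable {V : Type}

/-- The (reversed) history of the first `k` vertices of `π` (most recent first). -/
def hist (π : ℕ → V) (k : ℕ) : List V := (List.ofFn fun i : Fin k => π i).reverse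

/-- A strategy: given the (reversed) list of previously visited vertices and the current
vertex, it picks a successor of the current vertex. -/
structure Strategy (g : Game V) where
  next : List V → V → V
  valid : ∀ h v, g.E v (next h v)

/-- A memoryless strategy only depends on the current vertex. -/
def Strategy.Memoryless {g : Game V} (s : g.Strategy) : Prop :=
  ∀ h h' v, s.next h v = s.next h' v

/-- A finite-memory strategy is one encoded by a deterministic Moore machine
`⟨M, m0, up, dec⟩`: the choice after a finite play is `dec` applied to the memory state
reached by reading the play (the initial vertex is not read) and to the last vertex. -/
def Strategy.FiniteMemory {g : Game V} (s : g.Strategy) : Prop :=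
  ∃ (M : Type) (_ : Fintype M) (m0 : M) (up : M → V → M) (dec : M → V → V),
    ∀ h v, s.next h v = dec (List.foldl up m0 (((h.reverse ++ [v]).drop 1))) v

variable (g : Game V)

/-- Next vertex chosen by the owner of the current vertex. -/
def step (σ τ : g.Strategy) (h : List V) (v : V) : V :=
  if g.owner v then σ.next h v else τ.next h v

/-- Current vertex and reversed history after `k` steps of the play `Play(v, σ, τ)`. -/
def playAux (σ τ : g.Strategy) (v : V) : ℕ → V × List V
  | 0 => (v, [])
  | k+1 =>
      let p := playAux σ τ v k
      (g.step σ τ p.2 p.1, p.1 :: p.2)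

/-- `Play(v, σ, τ)`: the unique play starting in `v` and conforming to the
strategy `σ` of Max and the strategy `τ` of Min. -/
def play (σ τ : g.Strategy) (v : V) (k : ℕ) : V := (g.playAux σ τ v k).1

/-- An infinite sequence of vertices is a play when consecutive vertices are linked
by edges. -/
def IsPlay (π : ℕ → V) : Prop := ∀ k, g.E (π k) (π (k+1))

/-- A play conforms to a strategy `s` of the player `p` if, whenever the current vertex
belongs to `p`, the next vertex is the one prescribed by `s`. -/
def Conforms (p : Bool) (s : g.Strategy) (π : ℕ → V) : Prop :=
  ∀ k, g.owner (π k) = p → π (k+1) = s.next (hist π k) (π k)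

/-- Total-payoff of the prefix of length `k`: the sum of the first `k` edge weights. -/
def TPfin (π : ℕ → V) (k : ℕ) : ℤ := ∑ i ∈ Finset.range k, g.w (π i) (π (i+1))

/-- Total payoff of an infinite play: `liminf` of the payoffs of its prefixes. -/
noncomputable def TP (π : ℕ → V) : EReal :=
  liminf (fun k => (((g.TPfin π k : ℤ) : ℝ) : EReal)) atTop

/-- Mean payoff of an infinite play. -/
noncomputable def MP (π : ℕ → V) : EReal :=
  liminf (fun k => ((((g.TPfin π k : ℤ) : ℝ) / (k : ℝ)) : EReal)) atTop

open Classical in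
/-- Min-cost reachability payoff with target `t`: total payoff up to the first visit
of `t`, and `+∞` if `t` is never visited. -/
noncomputable def MCR (t : V) (π : ℕ → V) : EReal :=
  if h : ∃ k, π k = t then (((g.TPfin π (Nat.find h) : ℤ) : ℝ) : EReal) else ⊤

open Classical in
/-- `MCR` payoff restricted to reaching the target among the first `i+1` vertices. -/
noncomputable def MCRbd (t : V) (i : ℕ) (π : ℕ → V) : EReal :=
  if ∃ k ≤ i, π k = t then g.MCR t π else ⊤

/-- Value of a strategy `σ` of Max from `v` : `inf_τ P(Play(v, σ, τ))`. -/
noncomputable def valMax (P : (ℕ → V) → EReal) (v : V) (σ : g.Strategy) : EReal :=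
  ⨅ τ : g.Strategy, P (g.play σ τ v)

/-- Value of a strategy `τ` of Min from `v` : `sup_σ P(Play(v, σ, τ))`. -/
noncomputable def valMin (P : (ℕ → V) → EReal) (v : V) (τ : g.Strategy) : EReal :=
  ⨆ σ : g.Strategy, P (g.play σ τ v)

/-- Lower value `Val⁻(v) = sup_σ inf_τ P(Play(v, σ, τ))`. -/
noncomputable def lowerVal (P : (ℕ → V) → EReal) (v : V) : EReal :=
  ⨆ σ : g.Strategy, g.valMax P v σ

/-- Upper value `Val⁺(v) = inf_τ sup_σ P(Play(v, σ, τ))`. -/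
noncomputable def upperVal (P : (ℕ → V) → EReal) (v : V) : EReal :=
  ⨅ τ : g.Strategy, g.valMin P v τ

end Game

/-- A min-cost reachability game: a game together with a target vertex `t` whose only
outgoing edge is a self-loop of weight `0`. -/
structure MCRGame (V : Type) extends Game V where
  t : V
  loop : E t t
  loopOnly : ∀ v, E t v → v = t
  loopZero : w t t = 0

/-- The value of a (determined) MCR game. -/
noncomputable def MCRGame.Val {V : Type} (G : MCRGame V) : V → EReal :=
  fun v => G.toGame.lowerVal (G.toGame.MCR G.t) v

/-- The `i`-step value `val_i(v) = inf_τ sup_σ MCR_i(Play(v, σ, τ))`. -/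
noncomputable def MCRGame.ival {V : Type} (G : MCRGame V) (i : ℕ) : V → EReal :=
  fun v => G.toGame.upperVal (G.toGame.MCRbd G.t i) v

open Classical in
/-- The one-step operator `F` of an MCR game with target `t`. -/
noncomputable def Fop {V : Type} (g : Game V) (t : V) (x : V → EReal) : V → EReal :=
  fun v =>
    if v = t then 0
    else if g.owner v = true then
      ⨆ v' ∈ {u | g.E v u}, ((((g.w v v' : ℤ) : ℝ) : EReal) + x v')
    else
      ⨅ v' ∈ {u | g.E v u}, ((((g.w v v' : ℤ) : ℝ) : EReal) + x v')

-- ============ auxiliary development ============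
namespace Game
variable {V : Type} {g : Game V}

noncomputable instance (g : Game V) : Nonempty g.Strategy :=
  ⟨⟨fun _ v => Classical.choose (g.nonempty v), fun _ v => Classical.choose_spec (g.nonempty v)⟩⟩

theorem Strategy.ext' {s1 s2 : g.Strategy} (h : s1.next = s2.next) : s1 = s2 := by
  cases s1; cases s2; simpa using h

/-- shift a strategy past an initial vertex `v`. -/
def shiftS (v : V) (s : g.Strategy) : g.Strategy :=
  ⟨fun h u => s.next (h ++ [v]) u, fun h u => s.valid _ _⟩

theorem playAux_succ_eq (σ τ : g.Strategy) (v : V) (k : ℕ) :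
    g.playAux σ τ v (k+1) =
      ((g.playAux (shiftS v σ) (shiftS v τ) (g.step σ τ [] v) k).1,
       (g.playAux (shiftS v σ) (shiftS v τ) (g.step σ τ [] v) k).2 ++ [v]) := by
  induction k with
  | zero => simp [playAux]
  | succ k ih =>
      show (g.step σ τ (g.playAux σ τ v (k+1)).2 (g.playAux σ τ v (k+1)).1,
        (g.playAux σ τ v (k+1)).1 :: (g.playAux σ τ v (k+1)).2) = _
      rw [ih]
      set Q := g.playAux (shiftS v σ) (shiftS v τ) (g.step σ τ [] v) k with hQ
      show (g.step σ τ (Q.2 ++ [v]) Q.1, Q.1 :: (Q.2 ++ [v])) = _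
      have hstep : g.step σ τ (Q.2 ++ [v]) Q.1
          = g.step (shiftS v σ) (shiftS v τ) Q.2 Q.1 := by
        unfold step shiftS
        by_cases h : g.owner Q.1 <;> simp [h]
      rw [hstep]
      rfl

theorem play_succ (σ τ : g.Strategy) (v : V) (k : ℕ) :
    g.play σ τ v (k+1) = g.play (shiftS v σ) (shiftS v τ) (g.step σ τ [] v) k := by
  unfold play; rw [playAux_succ_eq]

@[simp] theorem play_zero (σ τ : g.Strategy) (v : V) : g.play σ τ v 0 = v := rfl

theorem play_one (σ τ : g.Strategy) (v : V) : g.play σ τ v 1 = g.step σ τ [] v := by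
  rw [play_succ]; rfl

end Game
namespace Game
variable {V : Type} {g : Game V}

open Classical in
/-- A strategy with prescribed first move `u` at `v` (empty history) whose shift is `s`. -/
noncomputable def extendS (v : V) {u : V} (hu : g.E v u) (s : g.Strategy) : g.Strategy where
  next h v' :=
    if h = [] then (if hv : v' = v then u else s.next [] v') else s.next h.dropLast v'
  valid h v' := by
    split_ifs with h1 h2
    · subst h2; exact hu
    · exact s.valid _ _
    · exact s.valid _ _

theorem extendS_first (v : V) {u : V} (hu : g.E v u) (s : g.Strategy) :
    (extendS v hu s).next [] v = u := by
  simp [extendS]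

theorem shiftS_extendS (v : V) {u : V} (hu : g.E v u) (s : g.Strategy) :
    shiftS v (extendS v hu s) = s := by
  apply Strategy.ext'
  funext h v'
  show (extendS v hu s).next (h ++ [v]) v' = s.next h v'
  have : h ++ [v] ≠ [] := by simp
  simp [extendS, this, List.dropLast_concat]

/-- Decomposition of a strategy into first move at `v` plus shifted strategy. -/
theorem surj_decomp (v : V) :
    Function.Surjective (fun s : g.Strategy =>
      ((⟨s.next [] v, s.valid [] v⟩ : {u // g.E v u}), shiftS v s)) := by
  rintro ⟨⟨u, hu⟩, s⟩
  refine ⟨extendS v hu s, ?_⟩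
  simp only [Prod.mk.injEq, Subtype.mk.injEq]
  exact ⟨extendS_first v hu s, shiftS_extendS v hu s⟩

theorem shiftS_surj (v : V) : Function.Surjective (shiftS (g := g) v) := by
  intro s
  obtain ⟨u, hu⟩ := g.nonempty v
  exact ⟨extendS v hu s, shiftS_extendS v hu s⟩

/-- Combination of a family of Min strategies, selected by the starting vertex. -/
def combS (fam : V → g.Strategy) : g.Strategy :=
  ⟨fun h v' => (fam (h.getLastD v')).next h v', fun h v' => (fam _).valid h v'⟩

theorem playAux_combS (fam : V → g.Strategy) (σ : g.Strategy) (u : V) (k : ℕ) :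
    g.playAux σ (combS fam) u k = g.playAux σ (fam u) u k ∧
    ((g.playAux σ (fam u) u k).2).getLastD ((g.playAux σ (fam u) u k).1) = u := by
  induction k with
  | zero => exact ⟨rfl, rfl⟩
  | succ k ih =>
      obtain ⟨h1, h2⟩ := ih
      set p := g.playAux σ (fam u) u k with hp
      constructor
      · show (g.step σ (combS fam) (g.playAux σ (combS fam) u k).2 (g.playAux σ (combS fam) u k).1,
          (g.playAux σ (combS fam) u k).1 :: (g.playAux σ (combS fam) u k).2) = _
        rw [h1]
        show (g.step σ (combS fam) p.2 p.1, p.1 :: p.2) = (g.step σ (fam u) p.2 p.1, p.1 :: p.2)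
        have : g.step σ (combS fam) p.2 p.1 = g.step σ (fam u) p.2 p.1 := by
          unfold step
          by_cases h : g.owner p.1
          · simp [h]
          · simp only [Bool.not_eq_true] at h
            simp only [h, Bool.false_eq_true, if_false]
            show (fam (p.2.getLastD p.1)).next p.2 p.1 = _
            rw [h2]
        rw [this]
      · show ((p.1 :: p.2).getLastD (g.step σ (fam u) p.2 p.1)) = u
        rw [List.getLastD_cons, h2]

theorem play_combS (fam : V → g.Strategy) (σ : g.Strategy) (u : V) :
    g.play σ (combS fam) u = g.play σ (fam u) u := by
  funext k; unfold play; rw [(playAux_combS fam σ u k).1]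

end Game
namespace Game
variable {V : Type} {g : Game V}

theorem TPfin_succ_shift (π : ℕ → V) (k : ℕ) :
    g.TPfin π (k+1) = g.w (π 0) (π 1) + g.TPfin (fun j => π (j+1)) k := by
  unfold TPfin
  rw [Finset.sum_range_succ' (fun i => g.w (π i) (π (i+1))) k]
  ring

open Classical in
theorem MCR_shift {t : V} (π : ℕ → V) (hne : π 0 ≠ t) :
    g.MCR t π = (((g.w (π 0) (π 1) : ℤ) : ℝ) : EReal) + g.MCR t (fun k => π (k+1)) := by
  by_cases h : ∃ k, π k = t
  · have h' : ∃ k, π (k+1) = t := by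
      obtain ⟨k, hk⟩ := h
      cases k with
      | zero => exact absurd hk hne
      | succ m => exact ⟨m, hk⟩
    have hfind : Nat.find h = Nat.find h' + 1 := by
      refine le_antisymm (Nat.find_le (Nat.find_spec h')) ?_
      rcases Nat.eq_zero_or_pos (Nat.find h) with h0 | hpos
      · exact absurd (h0 ▸ Nat.find_spec h) hne
      · obtain ⟨m, hm⟩ := Nat.exists_eq_add_of_lt hpos
        have : π (m + 1) = t := by
          have := Nat.find_spec h
          rwa [hm, Nat.zero_add] at this
        have := Nat.find_le (h := h') this
        omega
    rw [MCR, dif_pos h, MCR, dif_pos h', hfind, TPfin_succ_shift]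
    push_cast
    rfl
  · have h' : ¬ ∃ k, π (k+1) = t := fun ⟨k, hk⟩ => h ⟨k+1, hk⟩
    rw [MCR, dif_neg h, MCR, dif_neg h', EReal.coe_add_top]

theorem MCRbd_shift {t : V} (π : ℕ → V) (hne : π 0 ≠ t) (i : ℕ) :
    g.MCRbd t (i+1) π
      = (((g.w (π 0) (π 1) : ℤ) : ℝ) : EReal) + g.MCRbd t i (fun k => π (k+1)) := by
  by_cases h : ∃ k ≤ i, π (k+1) = t
  · have h2 : ∃ k ≤ i + 1, π k = t := by
      obtain ⟨k, hk, hkt⟩ := h; exact ⟨k+1, by omega, hkt⟩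
    rw [MCRbd, if_pos h2, MCRbd, if_pos h, MCR_shift π hne]
  · have h2 : ¬ ∃ k ≤ i + 1, π k = t := by
      rintro ⟨k, hk, hkt⟩
      cases k with
      | zero => exact hne hkt
      | succ m => exact h ⟨m, by omega, hkt⟩
    rw [MCRbd, if_neg h2, MCRbd, if_neg h, EReal.coe_add_top]

open Classical in
theorem MCRbd_start_target {t : V} (π : ℕ → V) (h0 : π 0 = t) (i : ℕ) :
    g.MCRbd t i π = 0 := by
  have h2 : ∃ k ≤ i, π k = t := ⟨0, Nat.zero_le i, h0⟩
  have h3 : ∃ k, π k = t := ⟨0, h0⟩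
  have hfind : Nat.find h3 = 0 := by
    simp [Nat.find_eq_zero h3, h0]
  rw [MCRbd, if_pos h2, MCR, dif_pos h3, hfind]
  simp [TPfin]

theorem MCRbd_antitone {t : V} (π : ℕ → V) {i j : ℕ} (hij : i ≤ j) :
    g.MCRbd t j π ≤ g.MCRbd t i π := by
  by_cases h : ∃ k ≤ i, π k = t
  · have h2 : ∃ k ≤ j, π k = t := by
      obtain ⟨k, hk, hkt⟩ := h; exact ⟨k, le_trans hk hij, hkt⟩
    rw [MCRbd, if_pos h2, MCRbd, if_pos h]
  · have : g.MCRbd t i π = ⊤ := by rw [MCRbd, if_neg h]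
    rw [this]; exact le_top

theorem MCR_le_MCRbd {t : V} (π : ℕ → V) (i : ℕ) : g.MCR t π ≤ g.MCRbd t i π := by
  rw [MCRbd]; split_ifs
  · exact le_rfl
  · exact le_top

end Game
section ERealHelpers

lemma cancel_add' (r : ℝ) (x : EReal) : ((-r : ℝ) : EReal) + ((r : EReal) + x) = x := by
  induction x using EReal.rec
  · simp [EReal.add_bot]
  · rw [← EReal.coe_add, ← EReal.coe_add]; norm_num
  · simp [EReal.coe_add_top]

noncomputable def addIso (r : ℝ) : EReal ≃o EReal where
  toFun x := (r : EReal) + x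
  invFun x := ((-r : ℝ) : EReal) + x
  left_inv x := cancel_add' r x
  right_inv x := by have := cancel_add' (-r) x; simpa using this
  map_rel_iff' := by
    intro a b
    constructor
    · intro h
      have h2 := add_le_add (le_refl ((-r : ℝ) : EReal)) (show (r:EReal) + a ≤ (r:EReal) + b from h)
      rwa [cancel_add', cancel_add'] at h2
    · intro h; exact add_le_add (le_refl (r : EReal)) h

lemma add_iInf' {ι : Sort*} (r : ℝ) (f : ι → EReal) :
    (r : EReal) + ⨅ i, f i = ⨅ i, ((r:EReal) + f i) := (addIso r).map_iInf f

lemma add_iSup' {ι : Sort*} (r : ℝ) (f : ι → EReal) :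
    (r : EReal) + ⨆ i, f i = ⨆ i, ((r:EReal) + f i) := (addIso r).map_iSup f

/-- exchange of inf and finite sup given a combination property. -/
lemma inf_sup_exchange {ι : Type*} [Finite ι] [Nonempty ι] {T : Sort*} [Nonempty T]
    (f : ι → T → EReal)
    (hcomb : ∀ fam : ι → T, ∃ t0 : T, ∀ u, f u t0 ≤ f u (fam u)) :
    ⨅ t0 : T, ⨆ u, f u t0 = ⨆ u, ⨅ t0 : T, f u t0 := by
  refine le_antisymm ?_ (iSup_iInf_le_iInf_iSup _)
  apply le_of_forall_gt_imp_ge_of_dense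
  intro b hb
  have hub : ∀ u, ∃ t0, f u t0 < b := by
    intro u
    exact iInf_lt_iff.mp (lt_of_le_of_lt (le_iSup (fun u => ⨅ t0, f u t0) u) hb)
  choose fam hfam using hub
  obtain ⟨t0, ht0⟩ := hcomb fam
  exact le_trans (iInf_le _ t0) (iSup_le fun u => le_trans (ht0 u) (hfam u).le)

/-- inf over ℕ of a finite sup of antitone sequences. -/
lemma iInf_iSup_antitone' {ι : Type*} [Finite ι] [Nonempty ι] (f : ι → ℕ → EReal)
    (hf : ∀ u, Antitone (f u)) :
    ⨅ n, ⨆ u, f u n = ⨆ u, ⨅ n, f u n := by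
  refine le_antisymm ?_ (iSup_iInf_le_iInf_iSup _)
  have hmax : ∀ n, ∃ u, (⨆ u', f u' n) = f u n := by
    intro n
    obtain ⟨u, hu⟩ := Finite.exists_max (fun u => f u n)
    exact ⟨u, le_antisymm (iSup_le hu) (le_iSup (fun u' => f u' n) u)⟩
  choose un hun using hmax
  obtain ⟨a, ha⟩ := Finite.exists_infinite_fiber un
  have ha' : (un ⁻¹' {a}).Infinite := Set.infinite_coe_iff.mp ha
  have key : ∀ j, (⨅ n, ⨆ u, f u n) ≤ f a j := by
    intro j
    obtain ⟨n, hn, hnj⟩ := ha'.exists_gt j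
    calc (⨅ n, ⨆ u, f u n) ≤ ⨆ u, f u n := iInf_le _ n
    _ = f (un n) n := hun n
    _ = f a n := by rw [show un n = a from hn]
    _ ≤ f a j := hf a hnj.le
  exact le_trans (le_iInf key) (le_iSup (fun u => ⨅ n, f u n) a)

end ERealHelpers
namespace MCRGame
variable {V : Type}

theorem ival_target (G : MCRGame V) (i : ℕ) : G.ival i G.t = 0 := by
  show (⨅ τ : G.toGame.Strategy, ⨆ σ : G.toGame.Strategy,
      G.toGame.MCRbd G.t i (G.toGame.play σ τ G.t)) = 0
  have h : ∀ σ τ : G.toGame.Strategy,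
      G.toGame.MCRbd G.t i (G.toGame.play σ τ G.t) = 0 := fun σ τ =>
    Game.MCRbd_start_target _ rfl _
  simp only [h, iSup_const, iInf_const]

theorem ival_succ (G : MCRGame V) [Fintype V] (i : ℕ) (v : V) :
    G.ival (i+1) v = Fop G.toGame G.t (G.ival i) v := by
  classical
  by_cases hv : v = G.t
  · subst hv
    rw [Fop, if_pos rfl, ival_target]
  · set g := G.toGame with hg
    set t := G.t with ht
    have hmain : ∀ σ τ : g.Strategy,
        g.MCRbd t (i+1) (g.play σ τ v)
          = (((g.w v (g.step σ τ [] v) : ℤ) : ℝ) : EReal)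
            + g.MCRbd t i (g.play (Game.shiftS v σ) (Game.shiftS v τ) (g.step σ τ [] v)) := by
      intro σ τ
      have hsh : (fun k => g.play σ τ v (k+1))
          = g.play (Game.shiftS v σ) (Game.shiftS v τ) (g.step σ τ [] v) := by
        funext k; exact Game.play_succ σ τ v k
      have h1 : g.play σ τ v 1 = g.step σ τ [] v := Game.play_one σ τ v
      have key := Game.MCRbd_shift (g := g) (t := t) (g.play σ τ v) hv i
      rw [h1, hsh] at key
      exact key
    have hSne : Nonempty {u // g.E v u} := by
      obtain ⟨u, hu⟩ := g.nonempty v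
      exact ⟨⟨u, hu⟩⟩
    have hSfin : Finite {u // g.E v u} := Subtype.finite
    have hival : ∀ u : V,
        (⨅ τh : g.Strategy, ⨆ σh : g.Strategy, g.MCRbd t i (g.play σh τh u))
          = G.ival i u := fun u => rfl
    cases hw : g.owner v with
    | true =>
      have hstep : ∀ σ τ : g.Strategy, g.step σ τ [] v = σ.next [] v := by
        intro σ τ; simp [Game.step, hw]
      have hsup : ∀ τ : g.Strategy,
          (⨆ σ : g.Strategy, g.MCRbd t (i+1) (g.play σ τ v))
            = ⨆ u : {u // g.E v u},
                ((((g.w v u : ℤ) : ℝ) : EReal)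
                  + ⨆ σh : g.Strategy, g.MCRbd t i (g.play σh (Game.shiftS v τ) u)) := by
        intro τ
        calc (⨆ σ : g.Strategy, g.MCRbd t (i+1) (g.play σ τ v))
            = ⨆ σ : g.Strategy, ((((g.w v (σ.next [] v) : ℤ) : ℝ) : EReal)
                + g.MCRbd t i (g.play (Game.shiftS v σ) (Game.shiftS v τ) (σ.next [] v))) := by
              refine iSup_congr (fun σ => ?_)
              rw [hmain σ τ, hstep σ τ]
          _ = ⨆ p : {u // g.E v u} × g.Strategy, ((((g.w v p.1 : ℤ) : ℝ) : EReal)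
                + g.MCRbd t i (g.play p.2 (Game.shiftS v τ) p.1)) :=
              (Game.surj_decomp (g := g) v).iSup_comp
                (g := fun p : {u // g.E v u} × g.Strategy =>
                  ((((g.w v p.1 : ℤ) : ℝ) : EReal)
                    + g.MCRbd t i (g.play p.2 (Game.shiftS v τ) p.1)))
          _ = ⨆ u : {u // g.E v u}, ⨆ σh : g.Strategy, ((((g.w v u : ℤ) : ℝ) : EReal)
                + g.MCRbd t i (g.play σh (Game.shiftS v τ) u)) := iSup_prod
          _ = ⨆ u : {u // g.E v u}, ((((g.w v u : ℤ) : ℝ) : EReal)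
                + ⨆ σh : g.Strategy, g.MCRbd t i (g.play σh (Game.shiftS v τ) u)) :=
              iSup_congr (fun u => (add_iSup' _ _).symm)
      have e2 : G.ival (i+1) v
          = ⨅ τh : g.Strategy, ⨆ u : {u // g.E v u},
              ((((g.w v u : ℤ) : ℝ) : EReal)
                + ⨆ σh : g.Strategy, g.MCRbd t i (g.play σh τh u)) :=
        calc G.ival (i+1) v
            = ⨅ τ : g.Strategy, ⨆ σ : g.Strategy, g.MCRbd t (i+1) (g.play σ τ v) := rfl
          _ = ⨅ τ : g.Strategy, ⨆ u : {u // g.E v u},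
                ((((g.w v u : ℤ) : ℝ) : EReal)
                  + ⨆ σh : g.Strategy, g.MCRbd t i (g.play σh (Game.shiftS v τ) u)) :=
              iInf_congr hsup
          _ = ⨅ τh : g.Strategy, ⨆ u : {u // g.E v u},
                ((((g.w v u : ℤ) : ℝ) : EReal)
                  + ⨆ σh : g.Strategy, g.MCRbd t i (g.play σh τh u)) :=
              (Game.shiftS_surj (g := g) v).iInf_comp
                (g := fun τh => ⨆ u : {u // g.E v u},
                  ((((g.w v u : ℤ) : ℝ) : EReal)
                    + ⨆ σh : g.Strategy, g.MCRbd t i (g.play σh τh u)))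
      have e3 : (⨅ τh : g.Strategy, ⨆ u : {u // g.E v u},
              ((((g.w v u : ℤ) : ℝ) : EReal)
                + ⨆ σh : g.Strategy, g.MCRbd t i (g.play σh τh u)))
          = ⨆ u : {u // g.E v u}, ⨅ τh : g.Strategy,
              ((((g.w v u : ℤ) : ℝ) : EReal)
                + ⨆ σh : g.Strategy, g.MCRbd t i (g.play σh τh u)) := by
        refine inf_sup_exchange _ (fun fam => ?_)
        refine ⟨Game.combS (fun x => if h : g.E v x then fam ⟨x, h⟩
          else Classical.arbitrary _), fun u => ?_⟩
        have hplay : ∀ σh : g.Strategy,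
            g.play σh (Game.combS (fun x => if h : g.E v x then fam ⟨x, h⟩
              else Classical.arbitrary _)) (u : V) = g.play σh (fam u) (u : V) := by
          intro σh
          rw [Game.play_combS _ σh (u : V), dif_pos u.2]
        refine le_of_eq ?_
        congr 1
        exact iSup_congr (fun σh => by rw [hplay σh])
      rw [e2, e3, Fop, if_neg hv, if_pos hw]
      rw [iSup_subtype]
      refine iSup_congr (fun u => iSup_congr (fun h => ?_))
      show (⨅ τh : g.Strategy, ((((g.w v u : ℤ) : ℝ) : EReal)
          + ⨆ σh : g.Strategy, g.MCRbd t i (g.play σh τh u))) = _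
      rw [← add_iInf', hival]
    | false =>
      have hstep : ∀ σ τ : g.Strategy, g.step σ τ [] v = τ.next [] v := by
        intro σ τ; simp [Game.step, hw]
      have hsup : ∀ τ : g.Strategy,
          (⨆ σ : g.Strategy, g.MCRbd t (i+1) (g.play σ τ v))
            = ((((g.w v (τ.next [] v) : ℤ) : ℝ) : EReal)
                + ⨆ σh : g.Strategy, g.MCRbd t i (g.play σh (Game.shiftS v τ) (τ.next [] v))) := by
        intro τ
        calc (⨆ σ : g.Strategy, g.MCRbd t (i+1) (g.play σ τ v))
            = ⨆ σ : g.Strategy, ((((g.w v (τ.next [] v) : ℤ) : ℝ) : EReal)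
                + g.MCRbd t i (g.play (Game.shiftS v σ) (Game.shiftS v τ) (τ.next [] v))) := by
              refine iSup_congr (fun σ => ?_)
              rw [hmain σ τ, hstep σ τ]
          _ = ((((g.w v (τ.next [] v) : ℤ) : ℝ) : EReal)
                + ⨆ σ : g.Strategy, g.MCRbd t i
                    (g.play (Game.shiftS v σ) (Game.shiftS v τ) (τ.next [] v))) :=
              (add_iSup' _ _).symm
          _ = ((((g.w v (τ.next [] v) : ℤ) : ℝ) : EReal)
                + ⨆ σh : g.Strategy, g.MCRbd t i (g.play σh (Game.shiftS v τ) (τ.next [] v))) := by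
              congr 1
              exact (Game.shiftS_surj (g := g) v).iSup_comp
                (g := fun σh => g.MCRbd t i (g.play σh (Game.shiftS v τ) (τ.next [] v)))
      have e2 : G.ival (i+1) v
          = ⨅ u : {u // g.E v u}, ⨅ τh : g.Strategy,
              ((((g.w v u : ℤ) : ℝ) : EReal)
                + ⨆ σh : g.Strategy, g.MCRbd t i (g.play σh τh u)) :=
        calc G.ival (i+1) v
            = ⨅ τ : g.Strategy, ⨆ σ : g.Strategy, g.MCRbd t (i+1) (g.play σ τ v) := rfl
          _ = ⨅ τ : g.Strategy, ((((g.w v (τ.next [] v) : ℤ) : ℝ) : EReal)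
                + ⨆ σh : g.Strategy, g.MCRbd t i (g.play σh (Game.shiftS v τ) (τ.next [] v))) :=
              iInf_congr hsup
          _ = ⨅ p : {u // g.E v u} × g.Strategy,
              ((((g.w v p.1 : ℤ) : ℝ) : EReal)
                + ⨆ σh : g.Strategy, g.MCRbd t i (g.play σh p.2 p.1)) :=
              (Game.surj_decomp (g := g) v).iInf_comp
                (g := fun p : {u // g.E v u} × g.Strategy =>
                  ((((g.w v p.1 : ℤ) : ℝ) : EReal)
                    + ⨆ σh : g.Strategy, g.MCRbd t i (g.play σh p.2 p.1)))
          _ = _ := iInf_prod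
      rw [e2, Fop, if_neg hv, if_neg (by simp [hw])]
      rw [iInf_subtype]
      refine iInf_congr (fun u => iInf_congr (fun h => ?_))
      show (⨅ τh : g.Strategy, ((((g.w v u : ℤ) : ℝ) : EReal)
          + ⨆ σh : g.Strategy, g.MCRbd t i (g.play σh τh u))) = _
      rw [← add_iInf', hival]

end MCRGame
section Helpers2

lemma coe_add_assoc' (a b : ℝ) (x : EReal) :
    (((a + b : ℝ)) : EReal) + x = (a : EReal) + ((b : EReal) + x) := by
  induction x using EReal.rec
  · simp [EReal.add_bot]
  · norm_cast; ring
  · simp [EReal.coe_add_top]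

lemma iInf_succ_antitone' (f : ℕ → EReal) (hf : Antitone f) :
    ⨅ i, f (i+1) = ⨅ i, f i :=
  le_antisymm (le_iInf fun i => le_trans (iInf_le _ i) (hf (Nat.le_succ i)))
    (le_iInf fun i => iInf_le _ (i+1))

end Helpers2

namespace MCRGame
variable {V : Type}

theorem ival_antitone (G : MCRGame V) (v : V) : Antitone (fun i => G.ival i v) := by
  intro i j hij
  exact iInf_mono (fun τ => iSup_mono (fun σ => Game.MCRbd_antitone _ hij))

theorem Val_le_ival (G : MCRGame V) (i : ℕ) (v : V) : G.Val v ≤ G.ival i v :=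
  calc G.Val v
      = ⨆ σ : G.toGame.Strategy, ⨅ τ : G.toGame.Strategy,
          G.toGame.MCR G.t (G.toGame.play σ τ v) := rfl
    _ ≤ ⨅ τ : G.toGame.Strategy, ⨆ σ : G.toGame.Strategy,
          G.toGame.MCR G.t (G.toGame.play σ τ v) :=
        iSup_iInf_le_iInf_iSup _
    _ ≤ G.ival i v :=
        iInf_mono (fun τ => iSup_mono (fun σ => Game.MCR_le_MCRbd _ _))

open Classical in
theorem le_Val_of_le_Fop (G : MCRGame V) [Fintype V] (x : V → EReal)
    (hx : ∀ v, x v ≤ Fop G.toGame G.t x v) : ∀ v, x v ≤ G.Val v := by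
  classical
  have hxt : x G.t ≤ 0 := by
    have := hx G.t
    rwa [Fop, if_pos rfl] at this
  -- greedy choice for Max
  have hmax : ∀ v : V, ∃ u, G.toGame.E v u ∧
      (G.toGame.owner v = true → v ≠ G.t →
        x v ≤ (((G.toGame.w v u : ℤ) : ℝ) : EReal) + x u) := by
    intro v
    by_cases ho : G.toGame.owner v = true ∧ v ≠ G.t
    · have hne : Nonempty {u // G.toGame.E v u} := by
        obtain ⟨u, hu⟩ := G.toGame.nonempty v
        exact ⟨⟨u, hu⟩⟩
      have hfin : Finite {u // G.toGame.E v u} := Subtype.finite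
      obtain ⟨u0, hu0⟩ := Finite.exists_max
        (fun u : {u // G.toGame.E v u} => (((G.toGame.w v u : ℤ) : ℝ) : EReal) + x u)
      have hxv := hx v
      rw [Fop, if_neg ho.2, if_pos ho.1] at hxv
      refine ⟨u0, u0.2, fun _ _ => le_trans hxv (iSup₂_le fun u hu => hu0 ⟨u, hu⟩)⟩
    · obtain ⟨u, hu⟩ := G.toGame.nonempty v
      exact ⟨u, hu, fun h1 h2 => absurd ⟨h1, h2⟩ ho⟩
  choose m hmE hmG using hmax
  set σstar : G.toGame.Strategy := ⟨fun _ v => m v, fun _ v => hmE v⟩ with hσ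
  -- single step inequality
  have hones : ∀ (τ : G.toGame.Strategy) (v : V) (k : ℕ),
      x (G.toGame.play σstar τ v k)
        ≤ (((G.toGame.w (G.toGame.play σstar τ v k) (G.toGame.play σstar τ v (k+1)) : ℤ) : ℝ) : EReal)
          + x (G.toGame.play σstar τ v (k+1)) := by
    intro τ v k
    set a := G.toGame.play σstar τ v k with ha
    set b := G.toGame.play σstar τ v (k+1) with hb
    have hab : b = G.toGame.step σstar τ (G.toGame.playAux σstar τ v k).2 a := rfl
    have hEb : G.toGame.E a b := by
      rw [hab]; unfold Game.step; split_ifs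
      · exact σstar.valid _ _
      · exact τ.valid _ _
    by_cases hat : a = G.t
    · have hbt : b = G.t := G.loopOnly b (by rwa [hat] at hEb)
      have hw0 : G.toGame.w a b = 0 := by rw [hat, hbt]; exact G.loopZero
      rw [hw0]
      have : x a ≤ x b := le_of_eq (by rw [hat, hbt])
      simpa using this
    · cases ho : G.toGame.owner a with
      | true =>
        have hba : b = m a := by
          rw [hab]; unfold Game.step; rw [ho]; simp [hσ]
        rw [hba]
        exact hmG a ho hat
      | false =>
        have hxa := hx a
        rw [Fop, if_neg hat, if_neg (by simp [ho])] at hxa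
        exact le_trans hxa (iInf₂_le b hEb)
  -- telescoping
  have htel : ∀ (τ : G.toGame.Strategy) (v : V) (k : ℕ),
      x v ≤ (((G.toGame.TPfin (G.toGame.play σstar τ v) k : ℤ) : ℝ) : EReal)
        + x (G.toGame.play σstar τ v k) := by
    intro τ v k
    induction k with
    | zero =>
        have : G.toGame.TPfin (G.toGame.play σstar τ v) 0 = 0 := rfl
        rw [this]
        simp
    | succ k ih =>
        refine le_trans ih ?_
        have hTP : ((G.toGame.TPfin (G.toGame.play σstar τ v) (k+1) : ℤ) : ℝ)
            = ((G.toGame.TPfin (G.toGame.play σstar τ v) k : ℤ) : ℝ)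
              + ((G.toGame.w (G.toGame.play σstar τ v k) (G.toGame.play σstar τ v (k+1)) : ℤ) : ℝ) := by
          have hz : G.toGame.TPfin (G.toGame.play σstar τ v) (k+1)
              = G.toGame.TPfin (G.toGame.play σstar τ v) k
                + G.toGame.w (G.toGame.play σstar τ v k) (G.toGame.play σstar τ v (k+1)) := by
            simp only [Game.TPfin]
            rw [Finset.sum_range_succ]
          rw [hz]
          push_cast
          ring
        rw [hTP, coe_add_assoc']
        exact add_le_add le_rfl (hones τ v k)
  -- MCR bound
  have hMCR : ∀ (τ : G.toGame.Strategy) (v : V),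
      x v ≤ G.toGame.MCR G.t (G.toGame.play σstar τ v) := by
    intro τ v
    by_cases h : ∃ k, G.toGame.play σstar τ v k = G.t
    · rw [Game.MCR, dif_pos h]
      have hfs : G.toGame.play σstar τ v (Nat.find h) = G.t := Nat.find_spec h
      calc x v ≤ (((G.toGame.TPfin (G.toGame.play σstar τ v) (Nat.find h) : ℤ) : ℝ) : EReal)
            + x (G.toGame.play σstar τ v (Nat.find h)) := htel τ v (Nat.find h)
        _ = _ + x G.t := by rw [hfs]
        _ ≤ _ + 0 := add_le_add le_rfl hxt
        _ = _ := add_zero _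
    · rw [Game.MCR, dif_neg h]; exact le_top
  intro v
  calc x v ≤ ⨅ τ : G.toGame.Strategy, G.toGame.MCR G.t (G.toGame.play σstar τ v) :=
        le_iInf (fun τ => hMCR τ v)
    _ ≤ ⨆ σ : G.toGame.Strategy, ⨅ τ : G.toGame.Strategy,
          G.toGame.MCR G.t (G.toGame.play σ τ v) :=
        le_iSup (fun σ => ⨅ τ : G.toGame.Strategy,
          G.toGame.MCR G.t (G.toGame.play σ τ v)) σstar
    _ = G.Val v := rfl

theorem Fop_limit (G : MCRGame V) [Fintype V] :
    Fop G.toGame G.t (fun v => ⨅ i, G.ival i v) = fun v => ⨅ i, G.ival i v := by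
  classical
  funext v
  have hstep : (⨅ i, G.ival i v) = ⨅ i, Fop G.toGame G.t (G.ival i) v := by
    rw [← iInf_succ_antitone' (fun i => G.ival i v) (ival_antitone G v)]
    exact iInf_congr (fun i => ival_succ G i v)
  by_cases hv : v = G.t
  · subst hv
    rw [Fop, if_pos rfl]
    have : ∀ i, G.ival i G.t = 0 := fun i => ival_target G i
    simp [this]
  · have hne : Nonempty {u // G.toGame.E v u} := by
      obtain ⟨u, hu⟩ := G.toGame.nonempty v
      exact ⟨⟨u, hu⟩⟩
    have hfin : Finite {u // G.toGame.E v u} := Subtype.finite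
    cases hw : G.toGame.owner v with
    | true =>
      have hF : ∀ (y : V → EReal), Fop G.toGame G.t y v
          = ⨆ u : {u // G.toGame.E v u}, ((((G.toGame.w v u : ℤ) : ℝ) : EReal) + y u) := by
        intro y
        rw [Fop, if_neg hv, if_pos hw, iSup_subtype]
        rfl
      rw [hF, hstep]
      have h2 : ∀ i, Fop G.toGame G.t (G.ival i) v
          = ⨆ u : {u // G.toGame.E v u}, ((((G.toGame.w v u : ℤ) : ℝ) : EReal) + G.ival i u) :=
        fun i => hF (G.ival i)
      calc ⨆ u : {u // G.toGame.E v u},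
              ((((G.toGame.w v u : ℤ) : ℝ) : EReal) + ⨅ i, G.ival i (u : V))
          = ⨆ u : {u // G.toGame.E v u}, ⨅ i,
              ((((G.toGame.w v u : ℤ) : ℝ) : EReal) + G.ival i (u : V)) :=
            iSup_congr (fun u => add_iInf' _ _)
        _ = ⨅ i, ⨆ u : {u // G.toGame.E v u},
              ((((G.toGame.w v u : ℤ) : ℝ) : EReal) + G.ival i (u : V)) :=
            (iInf_iSup_antitone' (fun (u : {u // G.toGame.E v u}) n =>
                ((((G.toGame.w v u : ℤ) : ℝ) : EReal) + G.ival n (u : V)))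
              (fun u i j hij =>
              add_le_add le_rfl (ival_antitone G (u : V) hij))).symm
        _ = ⨅ i, Fop G.toGame G.t (G.ival i) v := iInf_congr (fun i => (h2 i).symm)
    | false =>
      have hF : ∀ (y : V → EReal), Fop G.toGame G.t y v
          = ⨅ u : {u // G.toGame.E v u}, ((((G.toGame.w v u : ℤ) : ℝ) : EReal) + y u) := by
        intro y
        rw [Fop, if_neg hv, if_neg (by simp [hw]), iInf_subtype]
        rfl
      rw [hF, hstep]
      have h2 : ∀ i, Fop G.toGame G.t (G.ival i) v
          = ⨅ u : {u // G.toGame.E v u}, ((((G.toGame.w v u : ℤ) : ℝ) : EReal) + G.ival i u) :=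
        fun i => hF (G.ival i)
      calc ⨅ u : {u // G.toGame.E v u},
              ((((G.toGame.w v u : ℤ) : ℝ) : EReal) + ⨅ i, G.ival i (u : V))
          = ⨅ u : {u // G.toGame.E v u}, ⨅ i,
              ((((G.toGame.w v u : ℤ) : ℝ) : EReal) + G.ival i (u : V)) :=
            iInf_congr (fun u => add_iInf' _ _)
        _ = ⨅ i, ⨅ u : {u // G.toGame.E v u},
              ((((G.toGame.w v u : ℤ) : ℝ) : EReal) + G.ival i (u : V)) := iInf_comm
        _ = ⨅ i, Fop G.toGame G.t (G.ival i) v := iInf_congr (fun i => (h2 i).symm)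

theorem iInf_ival_eq_Val (G : MCRGame V) [Fintype V] (v : V) :
    (⨅ i, G.ival i v) = G.Val v := by
  refine le_antisymm ?_ (le_iInf (fun i => Val_le_ival G i v))
  exact le_Val_of_le_Fop G (fun v => ⨅ i, G.ival i v)
    (fun v => (congrFun (Fop_limit G) v).ge) v

end MCRGame
/-- in an MCR game all of whose vertices have finite value, the sequence
`(val_i)` converges pointwise to the value vector `Val`, and `Val` is the greatest fixed
point of the operator `F`. -/
theorem statement_9 {V : Type} [Fintype V] (G : MCRGame V)
    (hfin : ∀ v : V, ∃ m : ℤ, G.Val v = ((m : ℝ) : EReal)) :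
    (∀ v : V, Filter.Tendsto (fun i => G.ival i v) Filter.atTop (nhds (G.Val v)))
    ∧ Fop G.toGame G.t G.Val = G.Val
    ∧ ∀ x : V → EReal, Fop G.toGame G.t x = x → x ≤ G.Val := by
  have hV : ∀ v, (⨅ i, G.ival i v) = G.Val v := MCRGame.iInf_ival_eq_Val G
  refine ⟨?_, ?_, ?_⟩
  · intro v
    have h := tendsto_atTop_iInf (MCRGame.ival_antitone G v)
    rwa [hV v] at h
  · have h := MCRGame.Fop_limit G
    rwa [show (fun v => ⨅ i, G.ival i v) = G.Val from funext hV] at h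
  · intro x hxf
    exact fun v => MCRGame.le_Val_of_le_Fop G x (fun u => (congrFun hxf u).ge) v
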